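/- The pair (x, yx² + y) ∈ ℝ[x,y]² is a birational morphism of A² over ℝ (the subfield ℝ(x, yx²+y) of ℝ(x,y) equals ℝ(x,y)), but the corresponding ℝ-algebra endomorphism x→x, y→yx²+y of ℝ[x,y] is not a product of simple affine contractions: it is not a composition of finitely many maps each of which is either an ℝ-algebra automorphism of ℝ[x,y] or the map τ_x given by x→x, y→xy. -/

import Mathlib

/-- The map `τ_x : x ↦ x, y ↦ xy`, as a `K`-algebra endomorphism of `K[x,y]`. -/
noncomputable def tauX (K : Type*) [Field K] :
    MvPolynomial (Fin 2) K →ₐ[K] MvPolynomial (Fin 2) K :=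
  MvPolynomial.aeval ![MvPolynomial.X 0, MvPolynomial.X 0 * MvPolynomial.X 1]

/-- A simple affine contraction: a `K`-algebra endomorphism of `K[x,y]` that is either a
`K`-algebra automorphism or the map `τ_x : x ↦ x, y ↦ xy`. -/
def IsSimpleAffineContraction {K : Type*} [Field K]
    (ψ : MvPolynomial (Fin 2) K →ₐ[K] MvPolynomial (Fin 2) K) : Prop :=
  (∃ e : MvPolynomial (Fin 2) K ≃ₐ[K] MvPolynomial (Fin 2) K, ψ = e) ∨ ψ = tauX K

/-- `φ` is a composition of finitely many simple affine contractions. -/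
def IsProdOfSAC {K : Type*} [Field K]
    (φ : MvPolynomial (Fin 2) K →ₐ[K] MvPolynomial (Fin 2) K) : Prop :=
  ∃ L : List (MvPolynomial (Fin 2) K →ₐ[K] MvPolynomial (Fin 2) K),
    (∀ ψ ∈ L, IsSimpleAffineContraction ψ) ∧
    φ = L.foldr AlgHom.comp (AlgHom.id K (MvPolynomial (Fin 2) K))
/-- The pair `(u, v)` determines a birational morphism of the affine plane: the subfield
`K(u, v)` of the rational function field `K(x, y)` generated over `K` by `u` and `v`
equals all of `K(x, y)`. -/
def IsBirationalPair {K : Type*} [Field K] (u v : MvPolynomial (Fin 2) K) : Prop :=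
  IntermediateField.adjoin K
    {algebraMap (MvPolynomial (Fin 2) K) (FractionRing (MvPolynomial (Fin 2) K)) u,
     algebraMap (MvPolynomial (Fin 2) K) (FractionRing (MvPolynomial (Fin 2) K)) v} = ⊤

open MvPolynomial

/-- The induced map on `ℝ`-points of an `ℝ`-algebra endomorphism of `ℝ[x,y]`. -/
noncomputable def pointMap (ψ : MvPolynomial (Fin 2) ℝ →ₐ[ℝ] MvPolynomial (Fin 2) ℝ)
    (p : Fin 2 → ℝ) : Fin 2 → ℝ := fun i => MvPolynomial.aeval p (ψ (MvPolynomial.X i))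

lemma aeval_comp_pointMap (ψ : MvPolynomial (Fin 2) ℝ →ₐ[ℝ] MvPolynomial (Fin 2) ℝ)
    (p : Fin 2 → ℝ) :
    (MvPolynomial.aeval p).comp ψ = MvPolynomial.aeval (pointMap ψ p) := by
  apply MvPolynomial.algHom_ext
  intro i
  simp [pointMap]

lemma pointMap_comp (ψ₁ ψ₂ : MvPolynomial (Fin 2) ℝ →ₐ[ℝ] MvPolynomial (Fin 2) ℝ) :
    pointMap (ψ₁.comp ψ₂) = pointMap ψ₂ ∘ pointMap ψ₁ := by
  funext p i
  have := congrArg (fun F : MvPolynomial (Fin 2) ℝ →ₐ[ℝ] ℝ => F (ψ₂ (X i)))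
    (aeval_comp_pointMap ψ₁ p)
  simpa [pointMap] using this

lemma pointMap_id : pointMap (AlgHom.id ℝ (MvPolynomial (Fin 2) ℝ)) = id := by
  funext p i
  simp [pointMap]

lemma pointMap_equiv_surjective (e : MvPolynomial (Fin 2) ℝ ≃ₐ[ℝ] MvPolynomial (Fin 2) ℝ) :
    Function.Surjective (pointMap (e : MvPolynomial (Fin 2) ℝ →ₐ[ℝ] MvPolynomial (Fin 2) ℝ)) := by
  have hcomp : (e.symm.toAlgHom).comp e.toAlgHom = AlgHom.id ℝ (MvPolynomial (Fin 2) ℝ) := by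
    ext1 q; simp
  have h := pointMap_comp e.symm.toAlgHom e.toAlgHom
  rw [hcomp, pointMap_id] at h
  intro y
  exact ⟨pointMap e.symm.toAlgHom y, (congrFun h.symm y)⟩

lemma pointMap_tauX_not_injective : ¬ Function.Injective (pointMap (tauX ℝ)) := by
  intro h
  have h0 : pointMap (tauX ℝ) ![0, 0] = pointMap (tauX ℝ) ![0, 1] := by
    funext i
    fin_cases i <;> simp [pointMap, tauX]
  have := congrFun (h h0) 1
  norm_num at this

lemma foldr_SAC_equiv (L : List (MvPolynomial (Fin 2) ℝ →ₐ[ℝ] MvPolynomial (Fin 2) ℝ))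
    (hL : ∀ ψ ∈ L, IsSimpleAffineContraction ψ)
    (hinj : Function.Injective
      (pointMap (L.foldr AlgHom.comp (AlgHom.id ℝ (MvPolynomial (Fin 2) ℝ))))) :
    ∃ E : MvPolynomial (Fin 2) ℝ ≃ₐ[ℝ] MvPolynomial (Fin 2) ℝ,
      L.foldr AlgHom.comp (AlgHom.id ℝ (MvPolynomial (Fin 2) ℝ)) = E := by
  induction L with
  | nil =>
    refine ⟨AlgEquiv.refl, ?_⟩
    ext1 q; simp
  | cons ψ L ih =>
    have hfold : (ψ :: L).foldr AlgHom.comp (AlgHom.id ℝ (MvPolynomial (Fin 2) ℝ))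
        = ψ.comp (L.foldr AlgHom.comp (AlgHom.id ℝ (MvPolynomial (Fin 2) ℝ))) := rfl
    set F := L.foldr AlgHom.comp (AlgHom.id ℝ (MvPolynomial (Fin 2) ℝ)) with hF
    rw [hfold] at hinj ⊢
    rw [pointMap_comp] at hinj
    have hψinj : Function.Injective (pointMap ψ) := Function.Injective.of_comp hinj
    rcases hL ψ List.mem_cons_self with ⟨e, rfl⟩ | htau
    · have hsurj := pointMap_equiv_surjective e
      have hFinj : Function.Injective (pointMap F) := by
        intro a b hab
        obtain ⟨a', rfl⟩ := hsurj a
        obtain ⟨b', rfl⟩ := hsurj b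
        exact congrArg _ (hinj hab)
      obtain ⟨E, hE⟩ := ih (fun χ hχ => hL χ (List.mem_cons_of_mem _ hχ)) hFinj
      refine ⟨E.trans e, ?_⟩
      ext1 q
      simp [hE]
    · rw [htau] at hψinj
      exact absurd hψinj pointMap_tauX_not_injective

lemma phi_pointMap_injective :
    Function.Injective (pointMap (MvPolynomial.aeval ![X 0, X 1 * X 0 ^ 2 + X 1] :
      MvPolynomial (Fin 2) ℝ →ₐ[ℝ] MvPolynomial (Fin 2) ℝ)) := by
  intro p q h
  have h0 := congrFun h 0
  have h1 := congrFun h 1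
  simp [pointMap] at h0 h1
  have hpos : (p 0) ^ 2 + 1 > 0 := by positivity
  funext i
  fin_cases i
  · exact h0
  · show p 1 = q 1
    rw [h0] at h1 hpos
    nlinarith

lemma phi_not_equiv : ¬ ∃ E : MvPolynomial (Fin 2) ℝ ≃ₐ[ℝ] MvPolynomial (Fin 2) ℝ,
    (MvPolynomial.aeval ![X 0, X 1 * X 0 ^ 2 + X 1] :
      MvPolynomial (Fin 2) ℝ →ₐ[ℝ] MvPolynomial (Fin 2) ℝ) = E := by
  rintro ⟨E, hE⟩
  obtain ⟨p, hp⟩ := E.surjective (X 1)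
  have hp' : (MvPolynomial.aeval ![X 0, X 1 * X 0 ^ 2 + X 1] :
      MvPolynomial (Fin 2) ℝ →ₐ[ℝ] MvPolynomial (Fin 2) ℝ) p = X 1 := by rw [hE]; exact hp
  have key : ∀ c : ℂ,
      (MvPolynomial.aeval ![Complex.I, c] : MvPolynomial (Fin 2) ℝ →ₐ[ℝ] ℂ)
        ((MvPolynomial.aeval ![X 0, X 1 * X 0 ^ 2 + X 1] :
          MvPolynomial (Fin 2) ℝ →ₐ[ℝ] MvPolynomial (Fin 2) ℝ) p)
      = (MvPolynomial.aeval ![Complex.I, (0:ℂ)] : MvPolynomial (Fin 2) ℝ →ₐ[ℝ] ℂ) p := by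
    intro c
    have hcomp := MvPolynomial.comp_aeval (![X 0, X 1 * X 0 ^ 2 + X 1])
      (MvPolynomial.aeval ![Complex.I, c] : MvPolynomial (Fin 2) ℝ →ₐ[ℝ] ℂ)
    have hfun : (fun i => (MvPolynomial.aeval ![Complex.I, c] : MvPolynomial (Fin 2) ℝ →ₐ[ℝ] ℂ)
        (![X 0, X 1 * X 0 ^ 2 + X 1] i)) = ![Complex.I, (0:ℂ)] := by
      funext i
      fin_cases i <;> simp [Complex.I_sq]
    rw [hfun] at hcomp
    exact congrArg (fun F : MvPolynomial (Fin 2) ℝ →ₐ[ℝ] ℂ => F p) hcomp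
  have k0 := key 0
  have k1 := key 1
  rw [hp'] at k0 k1
  simp at k0 k1
  rw [← k0] at k1
  norm_num at k1

open MvPolynomial in
/-- The pair `(x, yx² + y)` is a birational morphism of the affine
plane over `ℝ`, but the corresponding endomorphism `x ↦ x, y ↦ yx² + y` of `ℝ[x,y]` is
not a product of simple affine contractions. -/
theorem real_example_birational_not_prodSAC :
    IsBirationalPair (X 0 : MvPolynomial (Fin 2) ℝ) (X 1 * X 0 ^ 2 + X 1) ∧
    ¬ IsProdOfSAC (MvPolynomial.aeval ![X 0, X 1 * X 0 ^ 2 + X 1] :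
        MvPolynomial (Fin 2) ℝ →ₐ[ℝ] MvPolynomial (Fin 2) ℝ) := by
  constructor
  · classical
    set R := MvPolynomial (Fin 2) ℝ
    set ι := algebraMap R (FractionRing R) with hι
    rw [IsBirationalPair, eq_top_iff]
    set F := IntermediateField.adjoin ℝ {ι (X 0 : R), ι (X 1 * X 0 ^ 2 + X 1)} with hFdef
    have hu : ι (X 0 : R) ∈ F := IntermediateField.subset_adjoin _ _ (Set.mem_insert _ _)
    have hv : ι (X 1 * X 0 ^ 2 + X 1 : R) ∈ F :=
      IntermediateField.subset_adjoin _ _ (Set.mem_insert_of_mem _ rfl)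
    have hιinj : Function.Injective ι := IsFractionRing.injective R (FractionRing R)
    have hne : (ι (X 0 : R)) ^ 2 + 1 ≠ 0 := by
      intro h
      have : ι ((X 0 : R) ^ 2 + 1) = ι 0 := by
        rw [map_add, map_pow, map_one, map_zero, h]
      have h2 := hιinj this
      have := congrArg (MvPolynomial.eval ![0, 0]) h2
      simp at this
    have hX1 : ι (X 1 : R) ∈ F := by
      have heq : ι (X 1 : R) = ι (X 1 * X 0 ^ 2 + X 1 : R) / ((ι (X 0 : R)) ^ 2 + 1) := by
        rw [eq_div_iff hne]
        have hv' : (X 1 * X 0 ^ 2 + X 1 : R) = X 1 * (X 0 ^ 2 + 1) := by ring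
        rw [hv', map_mul, map_add, map_pow, map_one]
      rw [heq]
      exact F.div_mem hv (F.add_mem (pow_mem hu 2) F.one_mem)
    have hX : ∀ n : Fin 2, ι (X n : R) ∈ F := by
      intro n; fin_cases n
      · exact hu
      · exact hX1
    have hpoly : ∀ p : R, ι p ∈ F := by
      intro p
      induction p using MvPolynomial.induction_on with
      | C a =>
        have : ι (C a : R) = algebraMap ℝ (FractionRing R) a := by
          rw [hι, ← MvPolynomial.algebraMap_eq, ← IsScalarTower.algebraMap_apply]
        rw [this]
        exact F.algebraMap_mem a
      | add p q hp hq => rw [map_add]; exact F.add_mem hp hq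
      | mul_X p n hp => rw [map_mul]; exact F.mul_mem hp (hX n)
    intro z _
    obtain ⟨a, b, _, rfl⟩ := IsFractionRing.div_surjective (A := R) z
    exact F.div_mem (hpoly a) (hpoly b)
  · rintro ⟨L, hL, hfold⟩
    have hinj := phi_pointMap_injective
    rw [hfold] at hinj
    obtain ⟨E, hE⟩ := foldr_SAC_equiv L hL hinj
    exact phi_not_equiv ⟨E, hfold.trans hE⟩
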